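/- Let F be a bi-atomic distribution on {a, b} with a < b. The following are equivalent: (i) F ≺cx U[0,1]; (ii) b − a ≤ 1/2 and the mean of F is 1/2. -/

import Mathlib

open MeasureTheory ProbabilityTheory Set

/-- The uniform distribution on `[a, b]`. -/
noncomputable def unif (a b : ℝ) : Measure ℝ :=
  (ENNReal.ofReal (b - a))⁻¹ • (volume.restrict (Set.Icc a b))

/-- `F` is smaller than `G` in convex order. -/
def ConvexOrder (F G : Measure ℝ) : Prop :=
  ∀ φ : ℝ → ℝ, ConvexOn ℝ Set.univ φ → Integrable φ F → Integrable φ G →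
    ∫ x, φ x ∂F ≤ ∫ x, φ x ∂G

/-- The set of possible distributions of `X 1 + ... + X n` with `X i ~ Fs i`. -/
def Dset (n : ℕ) (Fs : Fin n → Measure ℝ) : Set (Measure ℝ) :=
  {G | ∃ (Ω : Type) (_ : MeasureSpace Ω),
    IsProbabilityMeasure (ℙ : Measure Ω) ∧
    ∃ X : Fin n → Ω → ℝ, (∀ i, Measurable (X i)) ∧
      (∀ i, Measure.map (X i) ℙ = Fs i) ∧
      Measure.map (fun ω => ∑ i, X i ω) ℙ = G}

/-- The quantile (left-continuous inverse cdf) of a distribution. -/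
noncomputable def quantile (F : Measure ℝ) (t : ℝ) : ℝ :=
  sInf {x : ℝ | t ≤ (F (Set.Iic x)).toReal}

/-- `F` is the distribution of `X + Y` for some `X ~ μ`, `Y ~ ν`. -/
def IsSumDist (μ ν F : Measure ℝ) : Prop :=
  ∃ (Ω : Type) (_ : MeasureSpace Ω), IsProbabilityMeasure (ℙ : Measure Ω) ∧
    ∃ X Y : Ω → ℝ, Measurable X ∧ Measurable Y ∧
      Measure.map X ℙ = μ ∧ Measure.map Y ℙ = ν ∧
      Measure.map (fun ω => X ω + Y ω) ℙ = F

lemma my_integrable_dirac (f : ℝ → ℝ) (c : ℝ) : Integrable f (Measure.dirac c) := by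
  have h : (fun _ : ℝ => f c) =ᵐ[Measure.dirac c] f := by
    rw [MeasureTheory.ae_dirac_eq]
    exact Filter.eventually_pure.2 rfl
  exact (integrable_const (f c)).congr h

lemma my_integral_biatomic (f : ℝ → ℝ) (a b p : ℝ) (hp : 0 ≤ p) (hp1 : p ≤ 1) :
    ∫ x, f x ∂(ENNReal.ofReal p • Measure.dirac a + ENNReal.ofReal (1 - p) • Measure.dirac b)
      = p * f a + (1 - p) * f b := by
  rw [integral_add_measure ((my_integrable_dirac f a).smul_measure ENNReal.ofReal_ne_top)
    ((my_integrable_dirac f b).smul_measure ENNReal.ofReal_ne_top),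
    integral_smul_measure, integral_smul_measure, integral_dirac, integral_dirac,
    ENNReal.toReal_ofReal hp, ENNReal.toReal_ofReal (by linarith)]
  simp [smul_eq_mul]

lemma my_integrable_biatomic (f : ℝ → ℝ) (a b p : ℝ) :
    Integrable f (ENNReal.ofReal p • Measure.dirac a + ENNReal.ofReal (1 - p) • Measure.dirac b) :=
  ((my_integrable_dirac f a).smul_measure ENNReal.ofReal_ne_top).add_measure
    ((my_integrable_dirac f b).smul_measure ENNReal.ofReal_ne_top)

lemma my_integral_id_Icc (l r : ℝ) (h : l ≤ r) : ∫ x in Icc l r, x = (r^2 - l^2)/2 := by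
  rw [MeasureTheory.integral_Icc_eq_integral_Ioc, ← intervalIntegral.integral_of_le h,
    integral_id]

lemma my_jensen_set (φ : ℝ → ℝ) (hφ : ConvexOn ℝ Set.univ φ) (s : Set ℝ)
    (h0 : volume s ≠ 0) (hfin : volume s ≠ ⊤) (m : ℝ)
    (hm : ∫ x in s, x = (volume s).toReal * m)
    (hid : IntegrableOn id s volume) (hI : IntegrableOn φ s volume) :
    (volume s).toReal * φ m ≤ ∫ x in s, φ x := by
  set μ := volume.restrict s with hμ
  haveI : IsFiniteMeasure μ := ⟨by
    rw [hμ, Measure.restrict_apply_univ]; exact lt_top_iff_ne_top.2 hfin⟩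
  haveI : NeZero μ := ⟨by
    rw [hμ, Ne, Measure.restrict_eq_zero]; exact h0⟩
  have key := hφ.map_average_le (hφ.locallyLipschitz.continuous.continuousOn)
    isClosed_univ (f := id) (Filter.Eventually.of_forall fun _ => mem_univ _) hid hI
  have huniv : μ Set.univ = volume s := Measure.restrict_apply_univ _
  have hv : (0:ℝ) < (volume s).toReal := ENNReal.toReal_pos h0 hfin
  have havg : ⨍ x, id x ∂μ = m := by
    rw [average_eq, measureReal_def, huniv, hμ]
    simp only [id, smul_eq_mul]
    rw [hm]
    field_simp
  rw [havg] at key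
  have havg2 : ⨍ x, φ (id x) ∂μ = (volume s).toReal⁻¹ * ∫ x in s, φ x := by
    rw [average_eq, measureReal_def, huniv]; simp [hμ]
  rw [havg2] at key
  calc (volume s).toReal * φ m ≤ (volume s).toReal * ((volume s).toReal⁻¹ * ∫ x in s, φ x) := by
        exact mul_le_mul_of_nonneg_left key hv.le
    _ = ∫ x in s, φ x := by field_simp

lemma my_integral_max01 (p : ℝ) (h0 : 0 ≤ p) (h1 : p ≤ 1) :
    ∫ x in Icc (0:ℝ) 1, max (x - p) 0 = (1-p)^2/2 := by
  rw [MeasureTheory.integral_Icc_eq_integral_Ioc,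
    ← intervalIntegral.integral_of_le (by norm_num : (0:ℝ) ≤ 1),
    ← intervalIntegral.integral_add_adjacent_intervals (a := (0:ℝ)) (b := p) (c := 1)
      (((continuous_sub_right p).max continuous_const).intervalIntegrable _ _)
      (((continuous_sub_right p).max continuous_const).intervalIntegrable _ _)]
  have e1 : ∫ x in (0:ℝ)..p, max (x - p) 0 = ∫ x in (0:ℝ)..p, (0:ℝ) := by
    apply intervalIntegral.integral_congr
    intro x hx
    rw [Set.uIcc_of_le h0] at hx
    exact max_eq_right (by linarith [hx.2])
  have e2 : ∫ x in p..1, max (x - p) 0 = ∫ x in p..1, (x - p) := by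
    apply intervalIntegral.integral_congr
    intro x hx
    rw [Set.uIcc_of_le h1] at hx
    exact max_eq_left (by linarith [hx.1])
  rw [e1, e2, intervalIntegral.integral_sub intervalIntegral.intervalIntegrable_id
    (intervalIntegrable_const (c := p)), integral_id,
    intervalIntegral.integral_const, intervalIntegral.integral_const]
  simp only [smul_eq_mul]
  ring

lemma my_unif01 : unif 0 1 = volume.restrict (Set.Icc 0 1) := by
  simp [unif]


theorem stmt11 (a b p : ℝ) (hab : a < b) (hp : 0 < p) (hp1 : p < 1)
    (F : Measure ℝ)
    (hF : F = ENNReal.ofReal p • Measure.dirac a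
            + ENNReal.ofReal (1 - p) • Measure.dirac b) :
    ConvexOrder F (unif 0 1) ↔
      (b - a ≤ 1 / 2 ∧ p * a + (1 - p) * b = 1 / 2) := by
  constructor
  · intro h
    -- mean
    have hintU : ∀ (f : ℝ → ℝ), Continuous f → Integrable f (unif 0 1) := by
      intro f hf
      rw [my_unif01]
      exact hf.integrableOn_Icc
    have hid : ConvexOn ℝ (univ : Set ℝ) (fun x : ℝ => x) := convexOn_id convex_univ
    have hIU : ∫ x in Icc (0:ℝ) 1, x = 1/2 := by
      rw [my_integral_id_Icc 0 1 (by norm_num)]; norm_num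
    have h1 := h (fun x => x) hid (by rw [hF]; exact my_integrable_biatomic _ a b p)
      (hintU _ continuous_id)
    have h2 := h (fun x => -x) (by exact (concaveOn_id (convex_univ : Convex ℝ (univ : Set ℝ))).neg)
      (by rw [hF]; exact my_integrable_biatomic _ a b p)
      (hintU _ continuous_id.neg)
    rw [hF, my_integral_biatomic _ a b p hp.le hp1.le, my_unif01] at h1 h2
    rw [hIU] at h1
    have hIU2 : ∫ x in Icc (0:ℝ) 1, -x = -(1/2) := by
      rw [integral_neg, hIU]
    rw [hIU2] at h2
    have hmean : p * a + (1 - p) * b = 1/2 := by linarith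
    refine ⟨?_, hmean⟩
    -- stop-loss at p
    have hcvx : ConvexOn ℝ (univ : Set ℝ) (fun x : ℝ => max (x - p) 0) := by
      have h1 : ConvexOn ℝ (univ : Set ℝ) (fun x : ℝ => x - p) :=
        (convexOn_id convex_univ).sub (concaveOn_const p convex_univ)
      have h2 := h1.sup (convexOn_const (0:ℝ) convex_univ)
      simpa [Pi.sup_def, max_def] using h2
    have h3 := h (fun x => max (x - p) 0) hcvx
      (by rw [hF]; exact my_integrable_biatomic _ a b p)
      (hintU _ ((continuous_sub_right p).max continuous_const))
    rw [hF, my_integral_biatomic _ a b p hp.le hp1.le, my_unif01,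
      my_integral_max01 p hp.le hp1.le] at h3
    have hmb : b - p ≤ max (b - p) 0 := le_max_left _ _
    have hma : (0:ℝ) ≤ max (a - p) 0 := le_max_right _ _
    have h1p : (0:ℝ) ≤ 1 - p := by linarith
    have hmb2 : (1-p)*(b-p) ≤ (1-p)*max (b-p) 0 := mul_le_mul_of_nonneg_left hmb h1p
    have hma2 : (0:ℝ) ≤ p * max (a-p) 0 := mul_nonneg hp.le hma
    have hb3 : (1-p)*(b-p) ≤ (1-p)^2/2 := by linarith
    have hb4 : b ≤ (1+p)/2 := by nlinarith [hb3]
    by_contra hcon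
    push_neg at hcon
    have hcon2 : p * (1/2) < p * (b - a) := mul_lt_mul_of_pos_left hcon hp
    nlinarith [hcon2, hb4, hmean]
  · rintro ⟨hd, hmean⟩
    intro φ hφ hFi hUi0
    have hcont : Continuous φ := hφ.locallyLipschitz.continuous
    rw [hF, my_integral_biatomic _ a b p hp.le hp1.le, my_unif01]
    rw [my_unif01] at hUi0
    have hUi : IntegrableOn φ (Icc (0:ℝ) 1) volume := hUi0
    -- interval around a
    set l := a - p/2 with hl
    set r := a + p/2 with hr
    have ha2 : p/2 ≤ a := by nlinarith
    have hb2 : b ≤ 1 - (1-p)/2 := by nlinarith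
    have hlr : l ≤ r := by simp [hl, hr]; linarith
    have haup : a ≤ 1/2 := by nlinarith
    have hsub : Icc l r ⊆ Icc 0 1 := Icc_subset_Icc (by simp only [hl]; linarith)
      (by simp only [hr]; linarith)
    set A := Icc l r with hA
    set B := Icc (0:ℝ) 1 \ A with hB
    have hBmeas : MeasurableSet B := measurableSet_Icc.diff measurableSet_Icc
    have hvolA : volume A = ENNReal.ofReal p := by
      rw [hA, Real.volume_Icc]; congr 1; simp only [hr, hl]; ring
    have hvolB : volume B = ENNReal.ofReal (1 - p) := by
      rw [hB, measure_diff hsub measurableSet_Icc.nullMeasurableSet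
        (by rw [hvolA]; exact ENNReal.ofReal_ne_top), hvolA, Real.volume_Icc]
      rw [← ENNReal.ofReal_sub _ hp.le]
      norm_num
    have hsplit : ∀ f : ℝ → ℝ, IntegrableOn f (Icc 0 1) volume →
        ∫ x in Icc (0:ℝ) 1, f x = (∫ x in A, f x) + ∫ x in B, f x := by
      intro f hf
      have := setIntegral_union (f := f) (μ := volume) (disjoint_sdiff_right (s := A))
        hBmeas (hf.mono_set hsub) (hf.mono_set diff_subset)
      rwa [Set.union_diff_cancel hsub] at this
    have hidInt : IntegrableOn (fun x : ℝ => x) (Icc (0:ℝ) 1) volume :=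
      continuous_id.integrableOn_Icc
    have hintA : ∫ x in A, x = (volume A).toReal * a := by
      rw [hA, my_integral_id_Icc l r hlr, hvolA, ENNReal.toReal_ofReal hp.le]
      simp [hl, hr]; ring
    have hintB : ∫ x in B, x = (volume B).toReal * b := by
      have h01 : ∫ x in Icc (0:ℝ) 1, x = 1/2 := by
        rw [my_integral_id_Icc 0 1 (by norm_num)]; norm_num
      have := hsplit (fun x => x) hidInt
      rw [h01, hintA, hvolA, ENNReal.toReal_ofReal hp.le] at this
      rw [hvolB, ENNReal.toReal_ofReal (by linarith)]
      linarith
    have hJA := my_jensen_set φ hφ A (by rw [hvolA]; simp [hp]) (by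
        rw [hvolA]; exact ENNReal.ofReal_ne_top) a hintA
      (hidInt.mono_set hsub) (hUi.mono_set hsub)
    have hJB := my_jensen_set φ hφ B (by rw [hvolB]; simp; linarith) (by
        rw [hvolB]; exact ENNReal.ofReal_ne_top) b hintB
      (hidInt.mono_set diff_subset) (hUi.mono_set diff_subset)
    rw [hvolA, ENNReal.toReal_ofReal hp.le] at hJA
    rw [hvolB, ENNReal.toReal_ofReal (by linarith)] at hJB
    rw [hsplit φ hUi]
    linarith
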